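/- Let 0 < P_fa < P_d < 1 and let D*(t) be the Bernoulli Kullback–Leibler divergence between P_fa + t(1−2P_fa) and P_d + t(1−2P_d). Consider a K-level tree with N_k ≥ 1 nodes at level k, and for an integer attack configuration B = (B_1,…,B_K) with 0 ≤ B_k ≤ N_k let t_k(B) = Σ_{j=1}^k B_j/N_j and D(B) = Σ_{k=1}^K N_k · D*(t_k(B)). If B' is obtained from B by adding one Byzantine at some level j (B'_j = B_j + 1, B'_i = B_i otherwise) and t_k(B') < 1/2 for all k, then D(B') < D(B); i.e., the total KLD is strictly decreasing in each B_k in the region where the attacker cannot blind the fusion center. -/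

import Mathlib

open Finset

/-- Bernoulli Kullback–Leibler divergence between success probabilities `a` and `b`. -/
noncomputable def klBern (a b : ℝ) : ℝ :=
  a * Real.log (a / b) + (1 - a) * Real.log ((1 - a) / (1 - b))

/-- Per-node level KL divergence under the optimal attack `(1,1)` as a function of the
covered fraction `t`. -/
noncomputable def Dstar (Pfa Pd t : ℝ) : ℝ :=
  klBern (Pfa + t * (1 - 2 * Pfa)) (Pd + t * (1 - 2 * Pd))

private lemma core_ineq (a b : ℝ) (ha : 0 < a) (hab : a < b) (hb : b < 1) :
    (1 - 2*a) * (Real.log (a/b) - Real.log ((1-a)/(1-b)))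
      + (1 - 2*b) * ((1-a)/(1-b) - a/b) < 0 := by
  have ha1 : a < 1 := hab.trans hb
  have hb0 : 0 < b := ha.trans hab
  have h1a : 0 < 1 - a := by linarith
  have h1b : 0 < 1 - b := by linarith
  set w : ℝ := (a*(1-b))/(b*(1-a)) with hw
  have hw0 : 0 < w := by positivity
  have hw1 : w < 1 := by
    rw [hw, div_lt_one (by positivity)]
    nlinarith
  have hlogw : Real.log (a/b) - Real.log ((1-a)/(1-b)) = Real.log w := by
    rw [hw, Real.log_div ha.ne' hb0.ne', Real.log_div h1a.ne' h1b.ne',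
      Real.log_div (by positivity) (by positivity),
      Real.log_mul ha.ne' h1b.ne', Real.log_mul hb0.ne' h1a.ne']
    ring
  rw [hlogw]
  rcases lt_or_ge a (1/2) with h2 | h2
  · have h2a : 0 < 1 - 2*a := by linarith
    have hlt : Real.log w < w - 1 := Real.log_lt_sub_one_of_pos hw0 (ne_of_lt hw1)
    have halg : (1 - 2*a) * (w - 1) + (1 - 2*b) * ((1-a)/(1-b) - a/b)
        = -(b-a)^2 / (b*(1-a)*(1-b)) := by
      rw [hw]; field_simp; ring
    have hneg : -(b-a)^2 / (b*(1-a)*(1-b)) ≤ 0 := by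
      apply div_nonpos_of_nonpos_of_nonneg
      · nlinarith
      · positivity
    nlinarith [mul_lt_mul_of_pos_left hlt h2a]
  · have h2a : 1 - 2*a ≤ 0 := by linarith
    have hwinv : Real.log w⁻¹ < w⁻¹ - 1 :=
      Real.log_lt_sub_one_of_pos (by positivity) (by
        simp only [ne_eq, inv_eq_one]; exact ne_of_lt hw1)
    have hlt : 1 - 1/w < Real.log w := by
      rw [Real.log_inv] at hwinv
      have : 1/w = w⁻¹ := one_div w
      linarith [hwinv]
    have halg : (1 - 2*a) * (1 - 1/w) + (1 - 2*b) * ((1-a)/(1-b) - a/b)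
        = -(b-a)^2 / (a*b*(1-b)) := by
      rw [hw]; field_simp; ring
    have hneg : -(b-a)^2 / (a*b*(1-b)) < 0 := by
      apply div_neg_of_neg_of_pos
      · nlinarith
      · positivity
    nlinarith [mul_le_mul_of_nonpos_left hlt.le h2a]

private lemma dstar_hasDerivAt (Pfa Pd t : ℝ)
    (ha0 : 0 < Pfa + t * (1 - 2*Pfa)) (ha1 : Pfa + t * (1 - 2*Pfa) < 1)
    (hb0 : 0 < Pd + t * (1 - 2*Pd)) (hb1 : Pd + t * (1 - 2*Pd) < 1) :
    HasDerivAt (Dstar Pfa Pd)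
      ((1 - 2*Pfa) * (Real.log ((Pfa + t * (1 - 2*Pfa))/(Pd + t * (1 - 2*Pd)))
          - Real.log ((1 - (Pfa + t * (1 - 2*Pfa)))/(1 - (Pd + t * (1 - 2*Pd)))))
        + (1 - 2*Pd) * ((1 - (Pfa + t * (1 - 2*Pfa)))/(1 - (Pd + t * (1 - 2*Pd)))
          - (Pfa + t * (1 - 2*Pfa))/(Pd + t * (1 - 2*Pd)))) t := by
  set a := Pfa + t * (1 - 2*Pfa) with hadef
  set b := Pd + t * (1 - 2*Pd) with hbdef
  have h1a : 0 < 1 - a := by linarith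
  have h1b : 0 < 1 - b := by linarith
  have hA : HasDerivAt (fun s => Pfa + s * (1 - 2*Pfa)) (1 - 2*Pfa) t := by
    simpa using (hasDerivAt_mul_const (1 - 2*Pfa)).const_add Pfa
  have hB : HasDerivAt (fun s => Pd + s * (1 - 2*Pd)) (1 - 2*Pd) t := by
    simpa using (hasDerivAt_mul_const (1 - 2*Pd)).const_add Pd
  have h1A : HasDerivAt (fun s => 1 - (Pfa + s * (1 - 2*Pfa))) (-(1 - 2*Pfa)) t :=
    hA.const_sub 1
  have h1B : HasDerivAt (fun s => 1 - (Pd + s * (1 - 2*Pd))) (-(1 - 2*Pd)) t :=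
    hB.const_sub 1
  have hq1 : HasDerivAt (fun s => (Pfa + s * (1 - 2*Pfa)) / (Pd + s * (1 - 2*Pd)))
      (((1 - 2*Pfa) * b - a * (1 - 2*Pd)) / b^2) t := hA.div hB hb0.ne'
  have hq2 : HasDerivAt
      (fun s => (1 - (Pfa + s * (1 - 2*Pfa))) / (1 - (Pd + s * (1 - 2*Pd))))
      ((-(1 - 2*Pfa) * (1 - b) - (1 - a) * -(1 - 2*Pd)) / (1 - b)^2) t :=
    h1A.div h1B h1b.ne'
  have hl1 := hq1.log (div_ne_zero ha0.ne' hb0.ne')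
  have hl2 := hq2.log (div_ne_zero h1a.ne' h1b.ne')
  have hm1 := hA.mul hl1
  have hm2 := h1A.mul hl2
  have hsum := hm1.add hm2
  have hfun : Dstar Pfa Pd = fun s =>
      (Pfa + s * (1 - 2*Pfa)) * Real.log ((Pfa + s * (1 - 2*Pfa)) / (Pd + s * (1 - 2*Pd)))
      + (1 - (Pfa + s * (1 - 2*Pfa))) *
          Real.log ((1 - (Pfa + s * (1 - 2*Pfa))) / (1 - (Pd + s * (1 - 2*Pd)))) := by
    funext s; simp [Dstar, klBern]
  rw [hfun]
  refine hsum.congr_deriv ?_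
  clear_value a b
  simp only [← hadef, ← hbdef]
  have := ha0.ne'; have := hb0.ne'; have := h1a.ne'; have := h1b.ne'
  field_simp
  ring

private lemma dstar_strictAntiOn {Pfa Pd : ℝ}
    (hPfa : 0 < Pfa) (hPfaPd : Pfa < Pd) (hPd : Pd < 1) :
    StrictAntiOn (Dstar Pfa Pd) (Set.Icc 0 (1/2 : ℝ)) := by
  have hPd0 : 0 < Pd := hPfa.trans hPfaPd
  have hPfa1 : Pfa < 1 := hPfaPd.trans hPd
  have hbnd : ∀ t ∈ Set.Icc (0:ℝ) (1/2),
      0 < Pfa + t * (1 - 2*Pfa) ∧ Pfa + t * (1 - 2*Pfa) < 1 ∧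
      0 < Pd + t * (1 - 2*Pd) ∧ Pd + t * (1 - 2*Pd) < 1 := by
    rintro t ⟨ht0, ht1⟩
    refine ⟨?_, ?_, ?_, ?_⟩ <;> nlinarith [mul_nonneg ht0 hPfa.le, mul_nonneg ht0 hPd0.le,
      mul_nonneg ht0 (by linarith : (0:ℝ) ≤ 1 - Pfa), mul_nonneg ht0 (by linarith : (0:ℝ) ≤ 1 - Pd)]
  apply strictAntiOn_of_deriv_neg (convex_Icc _ _)
  · intro t ht
    obtain ⟨h1, h2, h3, h4⟩ := hbnd t ht
    exact (dstar_hasDerivAt Pfa Pd t h1 h2 h3 h4).continuousAt.continuousWithinAt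
  · intro t ht
    rw [interior_Icc] at ht
    obtain ⟨ht0, ht1⟩ := ht
    obtain ⟨h1, h2, h3, h4⟩ := hbnd t ⟨ht0.le, ht1.le⟩
    rw [(dstar_hasDerivAt Pfa Pd t h1 h2 h3 h4).deriv]
    set a := Pfa + t * (1 - 2*Pfa) with hadef
    set b := Pd + t * (1 - 2*Pd) with hbdef
    have hab : a < b := by rw [hadef, hbdef]; nlinarith
    have hcore := core_ineq a b h1 hab h4
    have ht2 : 0 < 1 - 2*t := by linarith
    have hkey : ((1 - 2*Pfa) * (Real.log (a/b) - Real.log ((1-a)/(1-b)))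
        + (1 - 2*Pd) * ((1-a)/(1-b) - a/b)) * (1 - 2*t)
        = (1 - 2*a) * (Real.log (a/b) - Real.log ((1-a)/(1-b)))
          + (1 - 2*b) * ((1-a)/(1-b) - a/b) := by
      rw [hadef, hbdef]; ring
    nlinarith [hkey, hcore]
/-- In the region where the attacker cannot blind the fusion center, the total KL
divergence `D(B) = ∑ₖ Nₖ · D*(∑_{j≤k} Bⱼ/Nⱼ)` strictly decreases when one more
Byzantine is added at any level `j`.  (Levels are indexed `0,…,K-1`.) -/
theorem stmt_13 (Pfa Pd : ℝ)
    (hPfa : 0 < Pfa) (hPfaPd : Pfa < Pd) (hPd : Pd < 1)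
    (K : ℕ) (N : ℕ → ℕ) (hN : ∀ k < K, 1 ≤ N k)
    (B : ℕ → ℕ) (hB : ∀ k < K, B k ≤ N k)
    (j : ℕ) (hj : j < K)
    (B' : ℕ → ℕ) (hB'def : B' = Function.update B j (B j + 1))
    (hB' : ∀ k < K, B' k ≤ N k)
    (hblind : ∀ k < K, ∑ i ∈ range (k + 1), (B' i : ℝ) / (N i : ℝ) < 1 / 2) :
    ∑ k ∈ range K, (N k : ℝ) *
        Dstar Pfa Pd (∑ i ∈ range (k + 1), (B' i : ℝ) / (N i : ℝ)) <
      ∑ k ∈ range K, (N k : ℝ) *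
        Dstar Pfa Pd (∑ i ∈ range (k + 1), (B i : ℝ) / (N i : ℝ)) := by
  have hgen : ∀ k : ℕ, ∑ i ∈ range (k + 1), (B' i : ℝ) / (N i : ℝ)
      = (∑ i ∈ range (k + 1), (B i : ℝ) / (N i : ℝ))
        + (if j ∈ range (k + 1) then 1 / (N j : ℝ) else 0) := by
    intro k
    have h1 : ∀ i, (B' i : ℝ) / (N i : ℝ)
        = (B i : ℝ) / (N i : ℝ) + (if i = j then 1 / (N j : ℝ) else 0) := by
      intro i
      by_cases h : i = j
      · subst h
        rw [hB'def, Function.update_self, if_pos rfl]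
        push_cast
        rw [add_div]
      · rw [hB'def, Function.update_of_ne h, if_neg h, add_zero]
    rw [Finset.sum_congr rfl (fun i _ => h1 i), Finset.sum_add_distrib,
      Finset.sum_ite_eq' (range (k + 1)) j (fun _ => 1 / (N j : ℝ))]
  have hNj : (0 : ℝ) < (N j : ℝ) := by
    exact_mod_cast Nat.lt_of_lt_of_le Nat.zero_lt_one (hN j hj)
  have hanti := dstar_strictAntiOn hPfa hPfaPd hPd
  have hstrict : ∀ k, k < K → j ≤ k →
      (N k : ℝ) * Dstar Pfa Pd (∑ i ∈ range (k + 1), (B' i : ℝ) / (N i : ℝ))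
        < (N k : ℝ) * Dstar Pfa Pd (∑ i ∈ range (k + 1), (B i : ℝ) / (N i : ℝ)) := by
    intro k hk hjk
    have hNk : (0 : ℝ) < (N k : ℝ) := by
      exact_mod_cast Nat.lt_of_lt_of_le Nat.zero_lt_one (hN k hk)
    have hjmem : j ∈ range (k + 1) := mem_range.mpr (by omega)
    have heq := hgen k
    rw [if_pos hjmem] at heq
    have h0 : (0 : ℝ) ≤ ∑ i ∈ range (k + 1), (B i : ℝ) / (N i : ℝ) :=
      Finset.sum_nonneg fun i _ => by positivity
    have hlt : (∑ i ∈ range (k + 1), (B i : ℝ) / (N i : ℝ))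
        < ∑ i ∈ range (k + 1), (B' i : ℝ) / (N i : ℝ) := by
      rw [heq]; have : 0 < 1 / (N j : ℝ) := by positivity
      linarith
    have hhalf := hblind k hk
    have hD := hanti (Set.mem_Icc.mpr ⟨h0, by linarith⟩)
      (Set.mem_Icc.mpr ⟨by linarith, hhalf.le⟩) hlt
    exact mul_lt_mul_of_pos_left hD hNk
  apply Finset.sum_lt_sum
  · intro k hk
    rcases lt_or_ge k j with h | h
    · have hnj : j ∉ range (k + 1) := by simp; omega
      rw [hgen k, if_neg hnj, add_zero]
    · exact (hstrict k (mem_range.mp hk) h).le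
  · exact ⟨j, mem_range.mpr hj, hstrict j hj le_rfl⟩
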